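/- (Observer convergence with a constant metric.) Let f : ℝⁿ → ℝⁿ be continuously differentiable with Jacobian A(x), B an n×m real matrix, C a p×n real matrix, W symmetric positive definite, λ > 0 and ρ ≥ 0 real, and suppose A(x)ᵀ·W + W·A(x) - ρ·Cᵀ·C ⪯ -2λW for all x ∈ ℝⁿ. Define L = (ρ/2)·W⁻¹·Cᵀ. Let u : [0,∞) → ℝᵐ be continuous, let x solve ẋ = f(x) + B·u(t) with output y(t) = C·x(t), and let x̂ solve the observer equation ẋ̂ = f(x̂) + B·u(t) + L·(y(t) - C·x̂). Then (x̂(t)-x(t))ᵀ·W·(x̂(t)-x(t)) ≤ e^{-2λt}·(x̂(0)-x(0))ᵀ·W·(x̂(0)-x(0)) for all t ≥ 0, so the state estimate converges exponentially to the true state with rate λ. -/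

import Mathlib

open Matrix

private lemma aux_hasDerivAt_mulVec {k l : ℕ} (M : Matrix (Fin k) (Fin l) ℝ)
    {c : ℝ → Fin l → ℝ} {c' : Fin l → ℝ} {t : ℝ} (h : HasDerivAt c c' t) :
    HasDerivAt (fun s => M.mulVec (c s)) (M.mulVec c') t := by
  rw [hasDerivAt_pi] at h ⊢
  intro i
  simp only [Matrix.mulVec, dotProduct]
  exact HasDerivAt.fun_sum fun j _ => (h j).const_mul (M i j)

private lemma aux_hasDerivAt_dotProduct {k : ℕ}
    {a b : ℝ → Fin k → ℝ} {a' b' : Fin k → ℝ} {t : ℝ}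
    (ha : HasDerivAt a a' t) (hb : HasDerivAt b b' t) :
    HasDerivAt (fun s => a s ⬝ᵥ b s) (a' ⬝ᵥ b t + a t ⬝ᵥ b') t := by
  rw [hasDerivAt_pi] at ha hb
  simp only [dotProduct]
  rw [← Finset.sum_add_distrib]
  exact HasDerivAt.fun_sum fun j _ => (ha j).mul (hb j)

/-- Observer convergence with a constant metric: if `A(x)ᵀW + WA(x) - ρCᵀC ⪯ -2λW` for
all `x`, then the observer with gain `L = (ρ/2)W⁻¹Cᵀ` converges exponentially to the true
state with rate `λ`, measured in the metric `W`. -/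
theorem observer_convergence_constant_metric {n m p : ℕ}
    (f : (Fin n → ℝ) → (Fin n → ℝ))
    (A : (Fin n → ℝ) → Matrix (Fin n) (Fin n) ℝ)
    (hf : ∀ x : Fin n → ℝ,
      HasFDerivAt f ((Matrix.toLin' (A x)).toContinuousLinearMap) x)
    (hA : Continuous A)
    (B : Matrix (Fin n) (Fin m) ℝ) (C : Matrix (Fin p) (Fin n) ℝ)
    (W : Matrix (Fin n) (Fin n) ℝ) (hW : W.PosDef)
    (lam ρ : ℝ) (hlam : 0 < lam) (hρ : 0 ≤ ρ)
    (hLMI : ∀ x : Fin n → ℝ,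
      ((-(2 * lam)) • W - ((A x)ᵀ * W + W * A x - ρ • (Cᵀ * C))).PosSemidef)
    (L : Matrix (Fin n) (Fin p) ℝ) (hL : L = (ρ / 2) • (W⁻¹ * Cᵀ))
    (u : ℝ → (Fin m → ℝ)) (hu : Continuous u)
    (x xhat : ℝ → (Fin n → ℝ))
    (y : ℝ → (Fin p → ℝ)) (hy : ∀ t : ℝ, y t = C.mulVec (x t))
    (hx : ∀ t : ℝ, 0 ≤ t → HasDerivAt x (f (x t) + B.mulVec (u t)) t)
    (hxhat : ∀ t : ℝ, 0 ≤ t →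
      HasDerivAt xhat
        (f (xhat t) + B.mulVec (u t) + L.mulVec (y t - C.mulVec (xhat t))) t) :
    ∀ t : ℝ, 0 ≤ t →
      (xhat t - x t) ⬝ᵥ W.mulVec (xhat t - x t) ≤
        Real.exp (-(2 * lam) * t) * ((xhat 0 - x 0) ⬝ᵥ W.mulVec (xhat 0 - x 0)) := by
  -- notation
  set e : ℝ → Fin n → ℝ := fun t => xhat t - x t with he_def
  set V : ℝ → ℝ := fun t => e t ⬝ᵥ W.mulVec (e t) with hV_def
  -- symmetry of W
  have hWs : Wᵀ = W := hW.isHermitian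
  have hsym : ∀ a b : Fin n → ℝ, a ⬝ᵥ W.mulVec b = W.mulVec a ⬝ᵥ b := by
    intro a b
    rw [Matrix.dotProduct_mulVec, ← Matrix.mulVec_transpose, hWs]
  -- W * L = (ρ/2) • Cᵀ
  have hWL : W * L = (ρ / 2) • Cᵀ := by
    rw [hL, Matrix.mul_smul, ← Matrix.mul_assoc,
      Matrix.mul_nonsing_inv W hW.det_pos.ne'.isUnit, Matrix.one_mul]
  -- key quadratic inequality from the LMI
  have key : ∀ (xx z : Fin n → ℝ),
      z ⬝ᵥ W.mulVec ((A xx).mulVec z) ≤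
        -lam * (z ⬝ᵥ W.mulVec z) + (ρ / 2) * (C.mulVec z ⬝ᵥ C.mulVec z) := by
    intro xx z
    have h0 := (hLMI xx).dotProduct_mulVec_nonneg z
    simp only [star_trivial] at h0
    set M := A xx with hM
    have e1 : z ⬝ᵥ (Mᵀ * W).mulVec z = z ⬝ᵥ W.mulVec (M.mulVec z) := by
      rw [← Matrix.mulVec_mulVec, Matrix.dotProduct_mulVec (R := ℝ) z Mᵀ,
        Matrix.vecMul_transpose, hsym z (M.mulVec z), dotProduct_comm]
    have e2 : z ⬝ᵥ (W * M).mulVec z = z ⬝ᵥ W.mulVec (M.mulVec z) := by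
      rw [← Matrix.mulVec_mulVec]
    have e3 : z ⬝ᵥ (Cᵀ * C).mulVec z = C.mulVec z ⬝ᵥ C.mulVec z := by
      rw [← Matrix.mulVec_mulVec, Matrix.dotProduct_mulVec (R := ℝ) z Cᵀ,
        Matrix.vecMul_transpose]
    simp only [Matrix.sub_mulVec, Matrix.add_mulVec, Matrix.smul_mulVec,
      dotProduct_sub, dotProduct_add, dotProduct_smul,
      smul_eq_mul] at h0
    rw [e1, e2, e3] at h0
    linarith
  -- derivative of the error
  have he' : ∀ t : ℝ, 0 ≤ t →
      HasDerivAt e (f (xhat t) - f (x t) - L.mulVec (C.mulVec (e t))) t := by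
    intro t ht
    have h := (hxhat t ht).sub (hx t ht)
    have hrw : (f (xhat t) + B.mulVec (u t) + L.mulVec (y t - C.mulVec (xhat t))) -
        (f (x t) + B.mulVec (u t)) =
        f (xhat t) - f (x t) - L.mulVec (C.mulVec (e t)) := by
      rw [hy, he_def]
      simp only [← Matrix.mulVec_sub]
      rw [show x t - xhat t = -(xhat t - x t) by abel, Matrix.mulVec_neg,
        Matrix.mulVec_neg]
      abel
    rw [hrw] at h
    exact h
  -- the crucial pointwise estimate
  have hest : ∀ t : ℝ, 0 ≤ t →
      e t ⬝ᵥ W.mulVec (f (xhat t) - f (x t) - L.mulVec (C.mulVec (e t))) ≤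
        -lam * V t := by
    intro t ht
    set z := e t with hz
    set K : ℝ := -lam * (z ⬝ᵥ W.mulVec z) + (ρ / 2) * (C.mulVec z ⬝ᵥ C.mulVec z)
      with hK
    -- mean value argument along the segment
    have hpath : ∀ s : ℝ, HasDerivAt (fun s : ℝ => x t + s • z) z s := by
      intro s
      have := ((hasDerivAt_id s).smul_const z).const_add (x t)
      simpa using this
    have hh : ∀ s : ℝ, HasDerivAt (fun s : ℝ => z ⬝ᵥ W.mulVec (f (x t + s • z)))
        (z ⬝ᵥ W.mulVec ((A (x t + s • z)).mulVec z)) s := by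
      intro s
      have hcomp : HasDerivAt (fun s : ℝ => f (x t + s • z))
          ((A (x t + s • z)).mulVec z) s := by
        have := (hf (x t + s • z)).comp_hasDerivAt s (hpath s)
        simpa [Matrix.toLin'_apply, Function.comp_def] using this
      have := aux_hasDerivAt_dotProduct (hasDerivAt_const s z)
        (aux_hasDerivAt_mulVec W hcomp)
      simpa using this
    have hmono : ∀ s : ℝ,
        HasDerivAt (fun s : ℝ => z ⬝ᵥ W.mulVec (f (x t + s • z)) - K * s)
          (z ⬝ᵥ W.mulVec ((A (x t + s • z)).mulVec z) - K) s := by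
      intro s
      simpa [Pi.sub_def] using (hh s).sub ((hasDerivAt_id s).const_mul K)
    have hanti : Antitone (fun s : ℝ => z ⬝ᵥ W.mulVec (f (x t + s • z)) - K * s) := by
      apply antitone_of_deriv_nonpos
      · exact fun s => (hmono s).differentiableAt
      · intro s
        rw [(hmono s).deriv]
        have := key (x t + s • z) z
        rw [hK]
        linarith
    have h01 := hanti (by norm_num : (0 : ℝ) ≤ 1)
    simp only [one_smul, zero_smul, add_zero, mul_one, mul_zero, sub_zero] at h01
    have hx1 : x t + z = xhat t := by
      funext i; simp only [hz, he_def, Pi.add_apply, Pi.sub_apply]; ring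
    rw [hx1] at h01
    -- the gain term
    have hgain : z ⬝ᵥ W.mulVec (L.mulVec (C.mulVec z)) =
        (ρ / 2) * (C.mulVec z ⬝ᵥ C.mulVec z) := by
      rw [Matrix.mulVec_mulVec, hWL, Matrix.smul_mulVec,
        dotProduct_smul, smul_eq_mul, Matrix.dotProduct_mulVec (R := ℝ) z Cᵀ,
        Matrix.vecMul_transpose]
    rw [Matrix.mulVec_sub, Matrix.mulVec_sub, dotProduct_sub,
      dotProduct_sub, hgain]
    have : V t = z ⬝ᵥ W.mulVec z := rfl
    rw [this, hK] at *
    linarith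
  -- derivative of V
  have hVd : ∀ t : ℝ, 0 ≤ t →
      HasDerivAt V (2 * (e t ⬝ᵥ W.mulVec (f (xhat t) - f (x t) -
        L.mulVec (C.mulVec (e t))))) t := by
    intro t ht
    have h := aux_hasDerivAt_dotProduct (he' t ht)
      (aux_hasDerivAt_mulVec W (he' t ht))
    have hsymm : (f (xhat t) - f (x t) - L.mulVec (C.mulVec (e t))) ⬝ᵥ
        W.mulVec (e t) = e t ⬝ᵥ W.mulVec (f (xhat t) - f (x t) -
        L.mulVec (C.mulVec (e t))) := by
      rw [hsym, dotProduct_comm]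
    rw [hsymm] at h
    have : e t ⬝ᵥ W.mulVec (f (xhat t) - f (x t) - L.mulVec (C.mulVec (e t))) +
        e t ⬝ᵥ W.mulVec (f (xhat t) - f (x t) - L.mulVec (C.mulVec (e t))) =
        2 * (e t ⬝ᵥ W.mulVec (f (xhat t) - f (x t) -
          L.mulVec (C.mulVec (e t)))) := by ring
    rw [this] at h
    exact h
  -- the Lyapunov function decays: consider g t = exp(2λt) * V t
  set g : ℝ → ℝ := fun t => Real.exp (2 * lam * t) * V t with hg_def
  have hgd : ∀ t : ℝ, 0 ≤ t → HasDerivAt g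
      (2 * lam * Real.exp (2 * lam * t) * V t +
        Real.exp (2 * lam * t) * (2 * (e t ⬝ᵥ W.mulVec (f (xhat t) - f (x t) -
          L.mulVec (C.mulVec (e t)))))) t := by
    intro t ht
    have hexp : HasDerivAt (fun t : ℝ => Real.exp (2 * lam * t))
        (2 * lam * Real.exp (2 * lam * t)) t := by
      have := ((hasDerivAt_id t).const_mul (2 * lam)).exp
      simpa [mul_comm] using this
    simpa [Pi.mul_def] using hexp.mul (hVd t ht)
  have hgle : ∀ t : ℝ, 0 ≤ t →
      (2 * lam * Real.exp (2 * lam * t) * V t +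
        Real.exp (2 * lam * t) * (2 * (e t ⬝ᵥ W.mulVec (f (xhat t) - f (x t) -
          L.mulVec (C.mulVec (e t)))))) ≤ 0 := by
    intro t ht
    have h1 := hest t ht
    have h2 : (0 : ℝ) < Real.exp (2 * lam * t) := Real.exp_pos _
    nlinarith [mul_le_mul_of_nonneg_left h1 h2.le]
  have hanti : AntitoneOn g (Set.Ici (0 : ℝ)) := by
    apply antitoneOn_of_deriv_nonpos (convex_Ici 0)
    · exact fun t ht => (hgd t ht).continuousAt.continuousWithinAt
    · intro t ht
      rw [interior_Ici] at ht
      exact (hgd t (le_of_lt ht)).differentiableAt.differentiableWithinAt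
    · intro t ht
      rw [interior_Ici] at ht
      rw [(hgd t (le_of_lt ht)).deriv]
      exact hgle t (le_of_lt ht)
  intro t ht
  have hg0 : g 0 = V 0 := by simp [hg_def]
  have hgt : g t ≤ g 0 := hanti (Set.self_mem_Ici) (Set.mem_Ici.2 ht) ht
  have hV0 : V 0 = (xhat 0 - x 0) ⬝ᵥ W.mulVec (xhat 0 - x 0) := rfl
  have hVt : V t = (xhat t - x t) ⬝ᵥ W.mulVec (xhat t - x t) := rfl
  rw [hg0] at hgt
  have hexpos : (0 : ℝ) < Real.exp (-(2 * lam) * t) := Real.exp_pos _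
  have := mul_le_mul_of_nonneg_left hgt hexpos.le
  rw [hg_def] at this
  simp only [← mul_assoc, ← Real.exp_add] at this
  rw [show -(2 * lam) * t + 2 * lam * t = 0 by ring, Real.exp_zero, one_mul] at this
  rw [← hVt, ← hV0]
  exact this
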